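/- Let (f_k)_{k∈ℕ} be a sequence in H and let T : ℓ²(ℕ) → H be a bounded linear operator with Tc = ∑_k c_k f_k for every c ∈ ℓ²(ℕ), and let Q be the orthogonal projection of ℓ²(ℕ) onto (ker T)ᗮ. If there exist constants A, B > 0 such that A‖Qc‖² ≤ ‖Tc‖² ≤ B‖Qc‖² for every c ∈ ℓ²(ℕ), then (f_k) is a frame sequence; in particular T has closed range. -/

import Mathlib

/- Setting: `H` is a complex Hilbert space, `ℓ2` is the Hilbert space of square-summable
complex sequences with standard orthonormal basis `lp.single 2 k 1`. -/

noncomputable section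

abbrev ℓ2 : Type := lp (fun _ : ℕ => ℂ) 2

variable {H : Type} [NormedAddCommGroup H] [InnerProductSpace ℂ H] [CompleteSpace H]

/-- The closed linear span `V` of the set of values of the sequence `f`. -/
def spanClosure (f : ℕ → H) : Submodule ℂ H :=
  (Submodule.span ℂ (Set.range f)).topologicalClosure

instance (f : ℕ → H) : CompleteSpace (spanClosure f) :=
  Submodule.topologicalClosure.completeSpace _

/-- `f` is a frame sequence with frame bounds `A`, `B`:  the frame inequality
`A‖g‖² ≤ ∑ₖ |⟨g, fₖ⟩|² ≤ B‖g‖²` holds for every `g` in the closed linear span `V` of the `fₖ`.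
(In Mathlib's convention, the paper's `⟨g, fₖ⟩`, linear in the first argument, is `⟪fₖ, g⟫`.) -/
def IsFrameSeqWith (f : ℕ → H) (A B : ℝ) : Prop :=
  0 < A ∧ 0 < B ∧
    ∀ g ∈ spanClosure f,
      Summable (fun k => ‖(inner ℂ (f k) g : ℂ)‖ ^ 2) ∧
      A * ‖g‖ ^ 2 ≤ ∑' k, ‖(inner ℂ (f k) g : ℂ)‖ ^ 2 ∧
      (∑' k, ‖(inner ℂ (f k) g : ℂ)‖ ^ 2) ≤ B * ‖g‖ ^ 2

/-- The orthogonal projection `Q` of `ℓ2` onto `(ker T)ᗮ`, as an operator `ℓ2 → ℓ2`. -/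
def projQ (T : ℓ2 →L[ℂ] H) : ℓ2 →L[ℂ] ℓ2 :=
  (LinearMap.ker (T : ℓ2 →ₗ[ℂ] H))ᗮ.subtypeL ∘L
    Submodule.orthogonalProjectionOnto (LinearMap.ker (T : ℓ2 →ₗ[ℂ] H))ᗮ

omit [CompleteSpace H] in
lemma my_norm_sq_eq (c : ℓ2) : ‖c‖ ^ 2 = ∑' k, ‖c k‖ ^ 2 := by
  have h := lp.norm_rpow_eq_tsum (p := 2) (by norm_num) c
  have h2 : (ENNReal.toReal 2) = (2 : ℝ) := by norm_num
  rw [h2] at h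
  calc ‖c‖ ^ 2 = ‖c‖ ^ (2:ℝ) := by rw [← Real.rpow_natCast ‖c‖ 2]; norm_num
  _ = ∑' k, ‖c k‖ ^ (2:ℝ) := h
  _ = ∑' k, ‖c k‖ ^ 2 := by
      refine tsum_congr fun k => ?_
      rw [← Real.rpow_natCast ‖c k‖ 2]; norm_num

omit [CompleteSpace H] in
lemma my_summable_sq (c : ℓ2) : Summable (fun k => ‖c k‖ ^ 2) := by
  have := (lp.memℓp c).summable (p := 2) (by norm_num)
  convert this using 2 with k
  rw [← Real.rpow_natCast ‖c k‖ 2]; norm_num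

omit [CompleteSpace H] in
lemma my_T_single (f : ℕ → H) (T : ℓ2 →L[ℂ] H)
    (hT : ∀ c : ℓ2, HasSum (fun k => c k • f k) (T c)) (k : ℕ) :
    T (lp.single 2 k 1) = f k := by
  refine (hT (lp.single 2 k 1)).unique ?_
  have : (fun j => ((lp.single 2 k 1 : ℓ2) j) • f j) = fun j => if j = k then f k else 0 := by
    funext j
    by_cases hj : j = k
    · subst hj; simp [lp.single_apply_self]
    · simp [lp.single_apply_ne 2 k _ hj, hj]
  rw [this]
  exact hasSum_ite_eq k (f k)

lemma my_adjoint_coord (f : ℕ → H) (T : ℓ2 →L[ℂ] H) (hTe : ∀ k, T (lp.single 2 k 1) = f k)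
    (g : H) (k : ℕ) : (ContinuousLinearMap.adjoint T g) k = inner ℂ (f k) g := by
  calc (ContinuousLinearMap.adjoint T g) k
      = (inner ℂ (lp.single 2 k (1:ℂ) : ℓ2) (ContinuousLinearMap.adjoint T g) : ℂ) := by
        rw [lp.inner_single_left]; simp
    _ = inner ℂ (T (lp.single 2 k 1)) g := ContinuousLinearMap.adjoint_inner_right T _ _
    _ = inner ℂ (f k) g := by rw [hTe k]

set_option maxHeartbeats 1000000 in
set_option synthInstance.maxHeartbeats 200000 in
/-- if the synthesis operator `T` of the sequence `(fₖ)` is bounded, defined on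
all of `ℓ²`, and satisfies `A‖Qc‖² ≤ ‖Tc‖² ≤ B‖Qc‖²` for some `A, B > 0` and all `c`, then
`(fₖ)` is a frame sequence; in particular `T` has closed range. -/
theorem stmt5 (f : ℕ → H) (T : ℓ2 →L[ℂ] H)
    (hT : ∀ c : ℓ2, HasSum (fun k => c k • f k) (T c))
    (A B : ℝ) (hA : 0 < A) (hB : 0 < B)
    (hin : ∀ c : ℓ2, A * ‖projQ T c‖ ^ 2 ≤ ‖T c‖ ^ 2 ∧ ‖T c‖ ^ 2 ≤ B * ‖projQ T c‖ ^ 2) :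
    (∃ A' B' : ℝ, IsFrameSeqWith f A' B') ∧ IsClosed (Set.range T) := by
  classical
  have hTe : ∀ k, T (lp.single 2 k 1) = f k := my_T_single f T hT
  set T' := ContinuousLinearMap.adjoint T with hT'def
  set K : Submodule ℂ ℓ2 := LinearMap.ker (T : ℓ2 →ₗ[ℂ] H) with hKdef
  haveI hKc : CompleteSpace K := (ContinuousLinearMap.isClosed_ker T).completeSpace_coe
  haveI hKoc : CompleteSpace Kᗮ := K.isClosed_orthogonal.completeSpace_coe
  have hQself : ∀ c : ℓ2, c ∈ Kᗮ → projQ T c = c := by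
    intro c hc
    have := Submodule.orthogonalProjectionOnto_mem_subspace_eq_self (K := Kᗮ) (⟨c, hc⟩ : Kᗮ)
    simpa [projQ] using congrArg Subtype.val this
  have hQmem : ∀ c : ℓ2, projQ T c ∈ Kᗮ := fun c => (Kᗮ.orthogonalProjectionOnto c).2
  have hTQ : ∀ c : ℓ2, T (projQ T c) = T c := by
    intro c
    have h : c - projQ T c ∈ Kᗮᗮ := Submodule.sub_starProjection_mem_orthogonal (K := Kᗮ) c
    rw [Submodule.orthogonal_orthogonal] at h
    have h0 : T (c - projQ T c) = 0 := h
    rw [map_sub, sub_eq_zero] at h0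
    exact h0.symm
  have hQle : ∀ c : ℓ2, ‖projQ T c‖ ≤ ‖c‖ := by
    intro c
    calc ‖projQ T c‖ = ‖Kᗮ.orthogonalProjectionOnto c‖ := rfl
      _ ≤ ‖Kᗮ.orthogonalProjectionOnto‖ * ‖c‖ := (Kᗮ.orthogonalProjectionOnto).le_opNorm c
      _ ≤ 1 * ‖c‖ := mul_le_mul_of_nonneg_right (Submodule.orthogonalProjectionOnto_norm_le Kᗮ) (norm_nonneg c)
      _ = ‖c‖ := one_mul _
  -- closed range
  set S : Kᗮ →L[ℂ] H := T ∘L Kᗮ.subtypeL with hSdef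
  have hApos : 0 < Real.sqrt A := Real.sqrt_pos.mpr hA
  have hSlow : ∀ x : Kᗮ, Real.sqrt A * ‖x‖ ≤ ‖S x‖ := by
    intro x
    have h := (hin x).1
    rw [hQself x x.2] at h
    have h2 : Real.sqrt (A * ‖(x:ℓ2)‖^2) ≤ Real.sqrt (‖T (x:ℓ2)‖^2) := Real.sqrt_le_sqrt h
    rw [Real.sqrt_mul hA.le, Real.sqrt_sq (norm_nonneg _), Real.sqrt_sq (norm_nonneg _)] at h2
    exact h2
  have hanti : AntilipschitzWith ⟨(Real.sqrt A)⁻¹, by positivity⟩ S := by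
    apply S.antilipschitz_of_bound
    intro x
    have h := hSlow x
    have : ‖x‖ ≤ (Real.sqrt A)⁻¹ * ‖S x‖ := by
      rw [inv_mul_eq_div, le_div_iff₀ hApos]
      linarith [hSlow x]
    exact this
  have hclosedS : IsClosed (Set.range S) := hanti.isClosed_range S.uniformContinuous
  have hrange : Set.range T = Set.range S := by
    ext y
    constructor
    · rintro ⟨c, rfl⟩
      exact ⟨⟨projQ T c, hQmem c⟩, hTQ c⟩
    · rintro ⟨x, rfl⟩
      exact ⟨x, rfl⟩
  have hclosed : IsClosed (Set.range T) := hrange ▸ hclosedS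
  -- span closure ⊆ range
  have hspan : ∀ g ∈ spanClosure f, ∃ c : ℓ2, c ∈ Kᗮ ∧ T c = g := by
    intro g hg
    have h1 : Submodule.span ℂ (Set.range f) ≤ LinearMap.range (T : ℓ2 →ₗ[ℂ] H) := by
      rw [Submodule.span_le]
      rintro _ ⟨k, rfl⟩
      exact ⟨lp.single 2 k 1, hTe k⟩
    have h2 : spanClosure f ≤ LinearMap.range (T : ℓ2 →ₗ[ℂ] H) := by
      rw [spanClosure]
      apply Submodule.topologicalClosure_minimal _ h1
      have : (LinearMap.range (T : ℓ2 →ₗ[ℂ] H) : Set H) = Set.range T := by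
        ext y; simp [LinearMap.mem_range]
      rw [this]
      exact hclosed
    obtain ⟨c, hc⟩ := h2 hg
    exact ⟨projQ T c, hQmem c, by rw [hTQ c]; exact hc⟩
  -- norm bound on T
  have hTnorm : ∀ c : ℓ2, ‖T c‖ ≤ Real.sqrt B * ‖c‖ := by
    intro c
    have h := (hin c).2
    have hQ := hQle c
    have h2 : ‖T c‖^2 ≤ B * ‖c‖^2 := by nlinarith [mul_le_mul_of_nonneg_left (mul_le_mul hQ hQ (norm_nonneg _) (norm_nonneg c)) hB.le]
    have h3 : Real.sqrt (‖T c‖^2) ≤ Real.sqrt (B * ‖c‖^2) := Real.sqrt_le_sqrt h2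
    rwa [Real.sqrt_mul hB.le, Real.sqrt_sq (norm_nonneg _), Real.sqrt_sq (norm_nonneg _)] at h3
  have hT'norm : ∀ g : H, ‖T' g‖ ≤ Real.sqrt B * ‖g‖ := by
    intro g
    have h1 : ‖T'‖ = ‖T‖ := LinearIsometryEquiv.norm_map ContinuousLinearMap.adjoint T
    have h2 : ‖T‖ ≤ Real.sqrt B := T.opNorm_le_bound (Real.sqrt_nonneg B) hTnorm
    calc ‖T' g‖ ≤ ‖T'‖ * ‖g‖ := T'.le_opNorm g
      _ ≤ Real.sqrt B * ‖g‖ := by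
          rw [h1]; exact mul_le_mul_of_nonneg_right h2 (norm_nonneg g)
  refine ⟨⟨A, B, hA, hB, ?_⟩, hclosed⟩
  intro g hg
  have hsum_eq : (fun k => ‖(inner ℂ (f k) g : ℂ)‖ ^ 2) = fun k => ‖(T' g) k‖ ^ 2 := by
    funext k; rw [my_adjoint_coord f T hTe g k]
  have hsummable : Summable (fun k => ‖(inner ℂ (f k) g : ℂ)‖ ^ 2) := by
    rw [hsum_eq]; exact my_summable_sq (T' g)
  have htsum : (∑' k, ‖(inner ℂ (f k) g : ℂ)‖ ^ 2) = ‖T' g‖ ^ 2 := by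
    rw [hsum_eq, ← my_norm_sq_eq]
  refine ⟨hsummable, ?_, ?_⟩
  · -- lower bound
    rw [htsum]
    obtain ⟨c, hcmem, hcg⟩ := hspan g hg
    have h1 : ‖g‖^2 ≤ ‖c‖ * ‖T' g‖ := by
      have e1 : (inner ℂ c (T' g) : ℂ) = inner ℂ g g := by
        rw [hT'def, ContinuousLinearMap.adjoint_inner_right, hcg]
      calc ‖g‖^2 = RCLike.re (inner ℂ g g : ℂ) := (inner_self_eq_norm_sq g).symm
        _ = RCLike.re (inner ℂ c (T' g) : ℂ) := by rw [e1]
        _ ≤ ‖(inner ℂ c (T' g) : ℂ)‖ := RCLike.re_le_norm _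
        _ ≤ ‖c‖ * ‖T' g‖ := norm_inner_le_norm c (T' g)
    have h2 : A * ‖c‖^2 ≤ ‖g‖^2 := by
      have := (hin c).1
      rwa [hQself c hcmem, hcg] at this
    rcases eq_or_lt_of_le (norm_nonneg g) with hg0 | hg0
    · have : ‖g‖ = 0 := hg0.symm
      rw [this]
      nlinarith [sq_nonneg ‖T' g‖]
    · have hkey : (A * ‖g‖^2) * ‖g‖^2 ≤ ‖T' g‖^2 * ‖g‖^2 := by
        nlinarith [mul_le_mul_of_nonneg_left (mul_le_mul h1 h1 (by positivity) (by positivity)) hA.le,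
          mul_le_mul_of_nonneg_right h2 (sq_nonneg ‖T' g‖)]
      exact le_of_mul_le_mul_right hkey (by positivity)
  · -- upper bound
    rw [htsum]
    have h := hT'norm g
    nlinarith [Real.sq_sqrt hB.le, Real.sqrt_nonneg B, norm_nonneg g, norm_nonneg (T' g)]

end
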